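/- Suppose t_1, …, t_n are bounded operators on H with t_i* t_j = δ_{ij}·1 for all i, j (isometries with pairwise orthogonal ranges), and let Θ(x) = Σ_{i=1}^n t_i x t_i*. Then for every k ≥ 1, Tr(1 − Θ^k(1)) = (Σ_{j=0}^{k−1} n^j)·Tr(1 − Θ(1)) in [0,∞]. Consequently, if Tr(1 − Θ(1)) < ∞, then Tr(1 − Θ^k(1))/(Σ_{j=0}^{k−1} n^j) → Tr(1 − Θ(1)) as k → ∞. -/

import Mathlib

open Filter Finset ContinuousLinearMap
open scoped ENNReal

section IsometricCurvatureAux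

local notation "⟪" x ", " y "⟫" => @inner ℂ _ _ x y

variable {H : Type*} [NormedAddCommGroup H] [InnerProductSpace ℂ H] [CompleteSpace H]
  {ι : Type*}

omit [CompleteSpace H] in
lemma parseval_ennreal (b : HilbertBasis ι ℂ H) (v : H) :
    ENNReal.ofReal (‖v‖ ^ 2) = ∑' j, ENNReal.ofReal (‖(⟪b j, v⟫ : ℂ)‖ ^ 2) := by
  have h := b.hasSum_inner_mul_inner v v
  have h3 := h.mapL Complex.reCLM
  simp only [Complex.reCLM_apply] at h3
  have key : ∀ j : ι, ((⟪v, b j⟫ : ℂ) * ⟪b j, v⟫).re = ‖(⟪b j, v⟫ : ℂ)‖ ^ 2 := by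
    intro j
    rw [← inner_conj_symm (b j) v, Complex.mul_conj]
    rw [Complex.normSq_eq_norm_sq, Complex.ofReal_re, RCLike.norm_conj]
  have h2 : HasSum (fun j => ‖(⟪b j, v⟫ : ℂ)‖ ^ 2) (‖v‖ ^ 2) := by
    rw [show ‖v‖ ^ 2 = (⟪v, v⟫ : ℂ).re from (inner_self_eq_norm_sq (𝕜 := ℂ) v).symm]
    exact (funext key : _) ▸ h3
  rw [← h2.tsum_eq, ENNReal.ofReal_tsum_of_nonneg (fun j => sq_nonneg _) h2.summable]

/-- Hilbert–Schmidt-type symmetry. -/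
lemma F_symm (b : HilbertBasis ι ℂ H) (s : H →L[ℂ] H) :
    ∑' i, ENNReal.ofReal (‖s (b i)‖ ^ 2) = ∑' i, ENNReal.ofReal (‖(star s) (b i)‖ ^ 2) := by
  calc ∑' i, ENNReal.ofReal (‖s (b i)‖ ^ 2)
      = ∑' i, ∑' j, ENNReal.ofReal (‖(⟪b j, s (b i)⟫ : ℂ)‖ ^ 2) :=
        tsum_congr fun i => parseval_ennreal b _
    _ = ∑' j, ∑' i, ENNReal.ofReal (‖(⟪b j, s (b i)⟫ : ℂ)‖ ^ 2) := ENNReal.tsum_comm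
    _ = ∑' j, ∑' i, ENNReal.ofReal (‖(⟪b i, (star s) (b j)⟫ : ℂ)‖ ^ 2) := by
        refine tsum_congr fun j => tsum_congr fun i => ?_
        congr 2
        rw [star_eq_adjoint, ← ContinuousLinearMap.adjoint_inner_left s, norm_inner_symm]
    _ = ∑' j, ENNReal.ofReal (‖(star s) (b j)‖ ^ 2) :=
        tsum_congr fun j => (parseval_ennreal b _).symm

/-- diagonal entries of `star s * s`. -/
lemma diag_star_mul (s : H →L[ℂ] H) (v : H) :
    (⟪v, (star s * s) v⟫ : ℂ).re = ‖s v‖ ^ 2 := by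
  rw [ContinuousLinearMap.mul_apply, star_eq_adjoint,
    ContinuousLinearMap.adjoint_inner_right]
  exact inner_self_eq_norm_sq (𝕜 := ℂ) _

lemma conj_factor {t q : H →L[ℂ] H} (hq : star q * q = q) :
    t * q * star t = star (q * star t) * (q * star t) := by
  have hqs : star q = q := by
    conv_lhs => rw [← hq]
    rw [star_mul, star_star, hq]
  have hqq : q * q = q := by nth_rewrite 1 [← hqs]; exact hq
  rw [star_mul, star_star, hqs, ← mul_assoc (t * q) q (star t), mul_assoc t q q, hqq]

end IsometricCurvatureAux


/-- The trace (in `[0,∞]`) of an operator on a complex Hilbert space, computed in a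
Hilbert (orthonormal) basis `b`: `Tr A = ∑ᵢ ⟨bᵢ, A bᵢ⟩` (real part, clamped to `[0,∞]`).
For a positive operator this is the usual trace, independent of the choice of basis. -/
noncomputable def opTrace {H : Type*} [NormedAddCommGroup H] [InnerProductSpace ℂ H]
    [CompleteSpace H] {ι : Type*} (b : HilbertBasis ι ℂ H) (A : H →L[ℂ] H) : ℝ≥0∞ :=
  ∑' i, ENNReal.ofReal (inner ℂ (b i) (A (b i)) : ℂ).re


section IsometricCurvatureAux2

local notation "⟪" x ", " y "⟫" => @inner ℂ _ _ x y

variable {H : Type*} [NormedAddCommGroup H] [InnerProductSpace ℂ H] [CompleteSpace H]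
  {ι : Type*}

lemma opTrace_star_mul (b : HilbertBasis ι ℂ H) (s : H →L[ℂ] H) :
    opTrace b (star s * s) = ∑' i, ENNReal.ofReal (‖s (b i)‖ ^ 2) :=
  tsum_congr fun i => by rw [diag_star_mul]

/-- norm preserved by isometry -/
lemma isom_norm {t : H →L[ℂ] H} (ht : star t * t = 1) (v : H) : ‖t v‖ = ‖v‖ := by
  have h1 := diag_star_mul t v
  rw [ht] at h1
  simp only [ContinuousLinearMap.one_apply] at h1
  have h2 : (⟪v, v⟫ : ℂ).re = ‖v‖ ^ 2 := inner_self_eq_norm_sq (𝕜 := ℂ) v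
  nlinarith [norm_nonneg (t v), norm_nonneg v]

/-- trace invariance: `Tr (t q t*) = Tr q` for an isometry `t`. -/
lemma opTrace_conj (b : HilbertBasis ι ℂ H) {t q : H →L[ℂ] H}
    (ht : star t * t = 1) (hq : star q * q = q) :
    opTrace b (t * q * star t) = opTrace b q := by
  have hqs : star q = q := by
    conv_lhs => rw [← hq]
    rw [star_mul, star_star, hq]
  rw [conj_factor hq, opTrace_star_mul, F_symm b (q * star t)]
  have h1 : star (q * star t) = t * q := by rw [star_mul, star_star, hqs]
  rw [h1]
  calc ∑' i, ENNReal.ofReal (‖(t * q) (b i)‖ ^ 2)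
      = ∑' i, ENNReal.ofReal (‖q (b i)‖ ^ 2) :=
        tsum_congr fun i => by rw [ContinuousLinearMap.mul_apply, isom_norm ht]
    _ = opTrace b q := by
        conv_rhs => rw [← hq]
        exact (opTrace_star_mul b q).symm

lemma opTrace_add_of_proj (b : HilbertBasis ι ℂ H) {A B : H →L[ℂ] H}
    (hA : star A * A = A) (hB : star B * B = B) :
    opTrace b (A + B) = opTrace b A + opTrace b B := by
  unfold opTrace
  rw [← ENNReal.tsum_add]
  refine tsum_congr fun i => ?_
  have hdA : (⟪b i, A (b i)⟫ : ℂ).re = ‖A (b i)‖ ^ 2 := by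
    conv_lhs => rw [← hA]
    exact diag_star_mul A (b i)
  have hdB : (⟪b i, B (b i)⟫ : ℂ).re = ‖B (b i)‖ ^ 2 := by
    conv_lhs => rw [← hB]
    exact diag_star_mul B (b i)
  have : (⟪b i, (A + B) (b i)⟫ : ℂ).re
      = (⟪b i, A (b i)⟫ : ℂ).re + (⟪b i, B (b i)⟫ : ℂ).re := by
    rw [ContinuousLinearMap.add_apply, inner_add_right, Complex.add_re]
  rw [this, ENNReal.ofReal_add (by rw [hdA]; positivity) (by rw [hdB]; positivity)]

/-- trace of `∑ tᵢ q tᵢ*` is `n · Tr q`. -/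
lemma opTrace_sum_conj (b : HilbertBasis ι ℂ H) {n : ℕ} {t : Fin n → H →L[ℂ] H}
    (ht : ∀ i, star (t i) * t i = 1) {q : H →L[ℂ] H} (hq : star q * q = q) :
    opTrace b (∑ i, t i * q * star (t i)) = n * opTrace b q := by
  have hdiag : ∀ v : H, (⟪v, (∑ i, t i * q * star (t i)) v⟫ : ℂ).re
      = ∑ i, ‖(q * star (t i)) v‖ ^ 2 := by
    intro v
    rw [ContinuousLinearMap.sum_apply, inner_sum, Complex.re_sum]
    refine Finset.sum_congr rfl fun i _ => ?_
    rw [conj_factor hq]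
    exact diag_star_mul _ v
  calc opTrace b (∑ i, t i * q * star (t i))
      = ∑' j, ∑ i, ENNReal.ofReal (‖(q * star (t i)) (b j)‖ ^ 2) := by
        refine tsum_congr fun j => ?_
        rw [hdiag, ENNReal.ofReal_sum_of_nonneg (fun i _ => sq_nonneg _)]
    _ = ∑ i, ∑' j, ENNReal.ofReal (‖(q * star (t i)) (b j)‖ ^ 2) :=
        Summable.tsum_finsetSum fun i _ => ENNReal.summable
    _ = ∑ i : Fin n, opTrace b q := by
        refine Finset.sum_congr rfl fun i _ => ?_
        have := opTrace_conj b (ht i) hq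
        rw [conj_factor hq, opTrace_star_mul] at this
        exact this
    _ = n * opTrace b q := by
        rw [Finset.sum_const, Finset.card_univ, Fintype.card_fin, nsmul_eq_mul]

end IsometricCurvatureAux2


/-- For isometries `t_1, …, t_n` with pairwise orthogonal ranges
(`tᵢ* tⱼ = δᵢⱼ · 1`) and `Θ x = ∑ tᵢ x tᵢ*`, one has
`Tr(1 - Θ^k(1)) = (∑_{j<k} n^j) · Tr(1 - Θ(1))` in `[0,∞]` for every `k ≥ 1`;
consequently, if `Tr(1 - Θ(1)) < ∞`, then
`Tr(1 - Θ^k(1)) / ∑_{j<k} n^j → Tr(1 - Θ(1))`. -/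
theorem isometric_curvature
    {H : Type*} [NormedAddCommGroup H] [InnerProductSpace ℂ H] [CompleteSpace H]
    {ι : Type*} (b : HilbertBasis ι ℂ H)
    (n : ℕ) (t : Fin n → H →L[ℂ] H)
    (hiso : ∀ i j, star (t i) * t j = if i = j then 1 else 0)
    (Θ : (H →L[ℂ] H) → (H →L[ℂ] H))
    (hΘ : ∀ x, Θ x = ∑ i, t i * x * star (t i)) :
    (∀ k : ℕ, 1 ≤ k →
      opTrace b (1 - Θ^[k] 1)
        = (∑ j ∈ Finset.range k, (n : ℝ≥0∞) ^ j) * opTrace b (1 - Θ 1)) ∧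
    (opTrace b (1 - Θ 1) ≠ ⊤ →
      Filter.Tendsto
        (fun k => opTrace b (1 - Θ^[k] 1) / ∑ j ∈ Finset.range k, (n : ℝ≥0∞) ^ j)
        Filter.atTop (nhds (opTrace b (1 - Θ 1)))) := by
  have hii : ∀ i, star (t i) * t i = 1 := fun i => by simpa using hiso i i
  -- Θ is multiplicative
  have hmul : ∀ x y, Θ x * Θ y = Θ (x * y) := by
    intro x y
    simp only [hΘ, Finset.sum_mul, Finset.mul_sum]
    refine Finset.sum_congr rfl fun i _ => ?_
    rw [Finset.sum_eq_single i]
    · have h1 : ∀ z : H →L[ℂ] H, star (t i) * (t i * z) = z := fun z => by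
        rw [← mul_assoc, hii, one_mul]
      simp only [mul_assoc]
      rw [h1]
    · intro j _ hji
      simp only [mul_assoc]
      rw [show star (t j) * (t i * (y * star (t i))) = 0 by
        rw [← mul_assoc, hiso j i, if_neg hji, zero_mul]]
      simp
    · simp
  -- Θ is star-preserving
  have hstar : ∀ x, star (Θ x) = Θ (star x) := by
    intro x
    simp only [hΘ, star_sum, star_mul, star_star, mul_assoc]
  -- Θ preserves subtraction
  have hsub : ∀ x y, Θ x - Θ y = Θ (x - y) := by
    intro x y
    simp only [hΘ, ← Finset.sum_sub_distrib, mul_sub, sub_mul]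
  set P : ℕ → (H →L[ℂ] H) := fun k => Θ^[k] 1 with hPdef
  have hP : ∀ k, star (P k) * P k = P k := by
    intro k
    induction k with
    | zero => simp [hPdef]
    | succ m ih =>
      have : P (m + 1) = Θ (P m) := Function.iterate_succ_apply' Θ m 1
      rw [this, hstar, hmul, ih]
  have hPs : ∀ k, star (P k) = P k := by
    intro k
    conv_lhs => rw [← hP k]
    rw [star_mul, star_star, hP k]
  have hPP : ∀ k, P k * P k = P k := fun k => by
    nth_rewrite 1 [← hPs k]; exact hP k
  have hq : ∀ k, star (1 - P k) * (1 - P k) = 1 - P k := by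
    intro k
    rw [star_sub, star_one, hPs]
    rw [mul_sub, sub_mul, sub_mul, hPP, one_mul, mul_one]
    abel
  set T := opTrace b (1 - Θ 1) with hT
  have hP1 : P 1 = Θ 1 := by simp [hPdef]
  -- recursion step
  have step : ∀ k, opTrace b (1 - P (k + 1)) = T + n * opTrace b (1 - P k) := by
    intro k
    have hsucc : P (k + 1) = Θ (P k) := Function.iterate_succ_apply' Θ k 1
    have hdec : 1 - P (k + 1) = (1 - Θ 1) + Θ (1 - P k) := by
      rw [hsucc, ← hsub]
      abel
    have hq1 : star (1 - Θ 1) * (1 - Θ 1) = 1 - Θ 1 := by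
      have := hq 1; rwa [hP1] at this
    have hq2 : star (Θ (1 - P k)) * Θ (1 - P k) = Θ (1 - P k) := by
      rw [hstar, hmul, hq k]
    rw [hdec, opTrace_add_of_proj b hq1 hq2, ← hT]
    congr 1
    rw [hΘ (1 - P k)]
    exact opTrace_sum_conj b hii (hq k)
  -- main formula by induction
  have main : ∀ m : ℕ, opTrace b (1 - P (m + 1))
      = (∑ j ∈ Finset.range (m + 1), (n : ℝ≥0∞) ^ j) * T := by
    intro m
    induction m with
    | zero => simp [hP1, hT]
    | succ m ih =>
      have hg : ∑ j ∈ Finset.range (m + 1 + 1), (n : ℝ≥0∞) ^ j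
          = (n : ℝ≥0∞) * ∑ j ∈ Finset.range (m + 1), (n : ℝ≥0∞) ^ j + 1 :=
        geom_sum_succ
      rw [step (m + 1), ih, hg]
      ring
  constructor
  · intro k hk
    obtain ⟨m, rfl⟩ := Nat.exists_eq_add_of_le hk
    rw [Nat.add_comm 1 m]
    exact main m
  · intro hTne
    have hc : ∀ k : ℕ, 1 ≤ k → (∑ j ∈ Finset.range k, (n : ℝ≥0∞) ^ j) ≠ 0 ∧
        (∑ j ∈ Finset.range k, (n : ℝ≥0∞) ^ j) ≠ ⊤ := by
      intro k hk
      constructor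
      · intro h0
        have h1 : ((n : ℝ≥0∞) ^ 0) ≤ ∑ j ∈ Finset.range k, (n : ℝ≥0∞) ^ j :=
          Finset.single_le_sum (f := fun j => (n : ℝ≥0∞) ^ j) (fun _ _ => zero_le)
            (Finset.mem_range.mpr hk)
        rw [h0] at h1
        simp at h1
      · refine (ENNReal.sum_lt_top.mpr fun j _ => ?_).ne
        exact ENNReal.pow_lt_top (ENNReal.natCast_lt_top n)
    have hev : ∀ᶠ k in atTop,
        opTrace b (1 - Θ^[k] 1) / ∑ j ∈ Finset.range k, (n : ℝ≥0∞) ^ j = T := by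
      refine eventually_atTop.2 ⟨1, fun k hk => ?_⟩
      obtain ⟨m, rfl⟩ := Nat.exists_eq_add_of_le hk
      obtain ⟨hc0, hctop⟩ := hc (1 + m) (by omega)
      have := main m
      rw [show m + 1 = 1 + m by omega] at this
      rw [show (Θ^[1 + m] (1 : H →L[ℂ] H)) = P (1 + m) from rfl, this]
      rw [ENNReal.div_eq_inv_mul, ← mul_assoc, ENNReal.inv_mul_cancel hc0 hctop, one_mul]
    exact Tendsto.congr' (hev.mono fun k h => h.symm) tendsto_const_nhds
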